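/- Let R be a biinvertible n²×n² complex R-matrix with associated matrices U and V, and suppose there exists a nonzero complex number α such that VU = α²I. Then (PR, U, α⁻¹, α) and (RP, V, α⁻¹, α) are enhanced R-matrices in the sense of Definition 1. -/

import Mathlib

open scoped BigOperators

namespace Enhance

noncomputable section

/-- n×n complex matrices. -/
abbrev Mat1 (n : ℕ) := Matrix (Fin n) (Fin n) ℂ

/-- n²×n² complex matrices, indexed by pairs. -/
abbrev Mat2 (n : ℕ) := Matrix (Fin n × Fin n) (Fin n × Fin n) ℂ

/-- n³×n³ complex matrices, indexed by triples. -/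
abbrev Mat3 (n : ℕ) := Matrix (Fin n × Fin n × Fin n) (Fin n × Fin n × Fin n) ℂ

/-- Kronecker product of two n×n matrices: (μ⊗ν)^{ab}_{cd} = μ^a_c ν^b_d. -/
def kron {n : ℕ} (μ ν : Mat1 n) : Mat2 n :=
  Matrix.of fun p q => μ p.1 q.1 * ν p.2 q.2

/-- The permutation matrix P^{ab}_{cd} = δ^a_d δ^b_c. -/
def Pmat (n : ℕ) : Mat2 n :=
  Matrix.of fun p q => if p.1 = q.2 ∧ p.2 = q.1 then 1 else 0

/-- A₁₂ = A ⊗ I. -/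
def A12 {n : ℕ} (A : Mat2 n) : Mat3 n :=
  Matrix.of fun p q => A (p.1, p.2.1) (q.1, q.2.1) * (if p.2.2 = q.2.2 then 1 else 0)

/-- A₂₃ = I ⊗ A. -/
def A23 {n : ℕ} (A : Mat2 n) : Mat3 n :=
  Matrix.of fun p q => (if p.1 = q.1 then 1 else 0) * A (p.2.1, p.2.2) (q.2.1, q.2.2)

/-- (A₁₃)^{abc}_{def} = A^{ac}_{df} δ^b_e. -/
def A13 {n : ℕ} (A : Mat2 n) : Mat3 n :=
  Matrix.of fun p q => A (p.1, p.2.2) (q.1, q.2.2) * (if p.2.1 = q.2.1 then 1 else 0)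

/-- First partial transpose: (A^{t₁})^{ab}_{cd} = A^{cb}_{ad}. -/
def t1 {n : ℕ} (A : Mat2 n) : Mat2 n :=
  Matrix.of fun p q => A (q.1, p.2) (p.1, q.2)

/-- Second partial transpose: (A^{t₂})^{ab}_{cd} = A^{ad}_{cb}. -/
def t2 {n : ℕ} (A : Mat2 n) : Mat2 n :=
  Matrix.of fun p q => A (p.1, q.2) (q.1, p.2)

/-- Second partial trace: Tr₂(A)^a_c = Σ_d A^{ad}_{cd}. -/
def Tr2 {n : ℕ} (A : Mat2 n) : Mat1 n :=
  Matrix.of fun a c => ∑ d, A (a, d) (c, d)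

/-- The quantum Yang–Baxter equation R₁₂R₁₃R₂₃ = R₂₃R₁₃R₁₂. -/
def QYB {n : ℕ} (R : Mat2 n) : Prop :=
  A12 R * A13 R * A23 R = A23 R * A13 R * A12 R

/-- The braid equation S₁₂S₂₃S₁₂ = S₂₃S₁₂S₂₃. -/
def Braid {n : ℕ} (S : Mat2 n) : Prop :=
  A12 S * A23 S * A12 S = A23 S * A12 S * A23 S

/-- R is biinvertible if both R and R^{t₂} are invertible. -/
def Biinv {n : ℕ} (R : Mat2 n) : Prop :=
  IsUnit R ∧ IsUnit (t2 R)

/-- R̃ = ((R^{t₂})⁻¹)^{t₂}. -/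
noncomputable def Rtil {n : ℕ} (R : Mat2 n) : Mat2 n := t2 (t2 R)⁻¹

/-- U^i_j = Σ_a R̃^{ai}_{ja}. -/
noncomputable def Umat {n : ℕ} (R : Mat2 n) : Mat1 n :=
  Matrix.of fun i j => ∑ a, Rtil R (a, i) (j, a)

/-- V^i_j = Σ_a R̃^{ia}_{aj}. -/
noncomputable def Vmat {n : ℕ} (R : Mat2 n) : Mat1 n :=
  Matrix.of fun i j => ∑ a, Rtil R (i, a) (a, j)

/-- Enhanced R-matrix in the sense of Definition 2 (Turaev, tangle category version). -/
def IsEnhanced2 {n : ℕ} (S : Mat2 n) (μ : Mat1 n) : Prop :=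
  IsUnit S ∧ IsUnit μ ∧ Braid S ∧
  S * kron μ μ = kron μ μ * S ∧
  Tr2 (S * kron 1 μ) = 1 ∧ Tr2 (S⁻¹ * kron 1 μ) = 1 ∧
  t1 (Pmat n * S⁻¹) * kron 1 μ * t1 (S * Pmat n) * kron 1 μ⁻¹ = 1 ∧
  t1 (Pmat n * S) * kron 1 μ * t1 (S⁻¹ * Pmat n) * kron 1 μ⁻¹ = 1

/-- Enhanced R-matrix in the sense of Definition 1 (Turaev, link invariant version). -/
def IsEnhanced1 {n : ℕ} (S : Mat2 n) (μ : Mat1 n) (α β : ℂ) : Prop :=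
  IsUnit S ∧ α ≠ 0 ∧ β ≠ 0 ∧ Braid S ∧
  S * kron μ μ = kron μ μ * S ∧
  Tr2 (S * kron μ μ) = (α * β) • μ ∧
  Tr2 (S⁻¹ * kron μ μ) = (α⁻¹ * β) • μ


section Aux

variable {n : ℕ}

lemma mul2_apply (A B : Mat2 n) (p q : Fin n × Fin n) :
    (A * B) p q = ∑ e, ∑ f, A p (e, f) * B (e, f) q := by
  rw [Matrix.mul_apply, Fintype.sum_prod_type]

lemma kron_mul_kron (A B C D : Mat1 n) : kron A B * kron C D = kron (A * C) (B * D) := by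
  ext p q
  rw [mul2_apply]
  simp only [kron, Matrix.of_apply, Matrix.mul_apply, Finset.sum_mul_sum]
  exact Finset.sum_congr rfl fun e _ => Finset.sum_congr rfl fun f _ => by ring

lemma kron_one_one : kron (1 : Mat1 n) 1 = 1 := by
  ext p q
  simp [kron, Matrix.one_apply, Prod.ext_iff, ite_and]
  split_ifs <;> simp_all

lemma Pmat_mul_Pmat : Pmat n * Pmat n = 1 := by
  ext p q
  rw [mul2_apply]
  simp [Pmat, Matrix.one_apply, Prod.ext_iff, ite_and, Finset.sum_ite_eq, Finset.sum_ite_eq']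

lemma Pmat_mul_kron (A B : Mat1 n) : Pmat n * kron A B = kron B A * Pmat n := by
  ext p q
  rw [mul2_apply, mul2_apply]
  simp [Pmat, kron, ite_and, ite_mul, mul_ite, Finset.sum_ite_eq, Finset.sum_ite_eq']
  ring

lemma t2_t2 (A : Mat2 n) : t2 (t2 A) = A := by
  ext p q; simp [t2]

lemma Tr2_kron_left (A : Mat1 n) (M : Mat2 n) : Tr2 (kron A 1 * M) = A * Tr2 M := by
  ext a c
  have h : ∀ d, (kron A 1 * M) (a, d) (c, d) = ∑ e, A a e * M (e, d) (c, d) := by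
    intro d
    rw [mul2_apply]
    refine Finset.sum_congr rfl fun e _ => ?_
    simp only [kron, Matrix.of_apply, Matrix.one_apply, mul_ite, mul_one, mul_zero, ite_mul,
      zero_mul]
    rw [Finset.sum_ite_eq]
    simp
  show Tr2 (kron A 1 * M) a c = (A * Tr2 M) a c
  rw [Matrix.mul_apply]
  calc Tr2 (kron A 1 * M) a c = ∑ d, (kron A 1 * M) (a, d) (c, d) := rfl
    _ = ∑ d, ∑ e, A a e * M (e, d) (c, d) := Finset.sum_congr rfl fun d _ => h d
    _ = ∑ e, ∑ d, A a e * M (e, d) (c, d) := Finset.sum_comm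
    _ = ∑ j, A a j * Tr2 M j c := Finset.sum_congr rfl fun j _ => (Finset.mul_sum _ _ _).symm


lemma relL (R : Mat2 n) (hbi : IsUnit (t2 R)) (a b c d : Fin n) :
    ∑ e, ∑ f, Rtil R (a, f) (e, b) * R (e, d) (c, f)
      = if a = c ∧ b = d then 1 else 0 := by
  have h1 : t2 (Rtil R) * t2 R = 1 := by
    rw [Rtil, t2_t2]
    exact Matrix.nonsing_inv_mul _ ((Matrix.isUnit_iff_isUnit_det _).mp hbi)
  have h2 : (t2 (Rtil R) * t2 R) (a, b) (c, d) = (1 : Mat2 n) (a, b) (c, d) := by rw [h1]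
  rw [mul2_apply] at h2
  simpa [t2, Matrix.one_apply, Prod.ext_iff] using h2

lemma relM (R : Mat2 n) (hbi : IsUnit (t2 R)) (a b c d : Fin n) :
    ∑ e, ∑ f, R (a, f) (e, b) * Rtil R (e, d) (c, f)
      = if a = c ∧ b = d then 1 else 0 := by
  have h1 : t2 R * t2 (Rtil R) = 1 := by
    rw [Rtil, t2_t2]
    exact Matrix.mul_nonsing_inv _ ((Matrix.isUnit_iff_isUnit_det _).mp hbi)
  have h2 : (t2 R * t2 (Rtil R)) (a, b) (c, d) = (1 : Mat2 n) (a, b) (c, d) := by rw [h1]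
  rw [mul2_apply] at h2
  simpa [t2, Matrix.one_apply, Prod.ext_iff] using h2

lemma mul3_apply (A B C : Mat3 n) (p q : Fin n × Fin n × Fin n) :
    (A * B * C) p q = ∑ x, ∑ y, A p x * B x y * C y q := by
  rw [Matrix.mul_apply]
  rw [Finset.sum_comm]
  refine Finset.sum_congr rfl fun x _ => ?_
  rw [Matrix.mul_apply, Finset.sum_mul]

lemma entryL (R : Mat2 n) (a b c d e f : Fin n) :
    (A12 R * A13 R * A23 R) (a, b, c) (d, e, f)
      = ∑ p, ∑ y, ∑ z, R (a, b) (p, y) * R (p, c) (d, z) * R (y, z) (e, f) := by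
  rw [mul3_apply]
  simp only [Fintype.sum_prod_type, A12, A13, A23, Matrix.of_apply]
  simp only [mul_ite, ite_mul, mul_one, one_mul, mul_zero, zero_mul, Finset.sum_ite_eq,
    Finset.sum_ite_eq', Finset.mem_univ, if_true, Finset.sum_ite_irrel, Finset.sum_const_zero]

lemma entryR (R : Mat2 n) (a b c d e f : Fin n) :
    (A23 R * A13 R * A12 R) (a, b, c) (d, e, f)
      = ∑ y, ∑ w, ∑ x, R (b, c) (y, w) * R (a, w) (x, f) * R (x, y) (d, e) := by
  rw [mul3_apply]
  simp only [Fintype.sum_prod_type, A12, A13, A23, Matrix.of_apply]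
  simp only [mul_ite, ite_mul, mul_one, one_mul, mul_zero, zero_mul, Finset.sum_ite_eq,
    Finset.sum_ite_eq', Finset.mem_univ, if_true, Finset.sum_ite_irrel, Finset.sum_const_zero]

lemma star (R : Mat2 n) (h : QYB R) (a b c d e f : Fin n) :
    ∑ p, ∑ y, ∑ z, R (a, b) (p, y) * R (p, c) (d, z) * R (y, z) (e, f)
      = ∑ y, ∑ w, ∑ x, R (b, c) (y, w) * R (a, w) (x, f) * R (x, y) (d, e) := by
  rw [← entryL, ← entryR, h]

section helpers
variable {α : Type*} [Fintype α]

lemma move1_3 (f : α → α → α → ℂ) :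
    ∑ a, ∑ b, ∑ c, f a b c = ∑ b, ∑ c, ∑ a, f a b c := by
  rw [Finset.sum_comm]
  exact Finset.sum_congr rfl fun b _ => Finset.sum_comm

lemma move1_4 (f : α → α → α → α → ℂ) :
    ∑ a, ∑ b, ∑ c, ∑ d, f a b c d = ∑ b, ∑ c, ∑ d, ∑ a, f a b c d := by
  rw [Finset.sum_comm]
  exact Finset.sum_congr rfl fun b _ => move1_3 _

lemma move1_5 (f : α → α → α → α → α → ℂ) :
    ∑ a, ∑ b, ∑ c, ∑ d, ∑ e, f a b c d e = ∑ b, ∑ c, ∑ d, ∑ e, ∑ a, f a b c d e := by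
  rw [Finset.sum_comm]
  exact Finset.sum_congr rfl fun b _ => move1_4 _

lemma col3_13 (g : α → α → α → ℂ) [DecidableEq α] (c d : α) :
    ∑ p, ∑ y, ∑ z, g p y z * (if p = c ∧ z = d then 1 else 0) = ∑ y, g c y d := by
  simp [mul_ite, ite_and, Finset.sum_ite_irrel, Finset.sum_const_zero, Finset.sum_ite_eq,
    Finset.sum_ite_eq']

lemma move1_6 (f : α → α → α → α → α → α → ℂ) :
    ∑ a, ∑ b, ∑ c, ∑ d, ∑ e, ∑ g, f a b c d e g
      = ∑ b, ∑ c, ∑ d, ∑ e, ∑ g, ∑ a, f a b c d e g := by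
  rw [Finset.sum_comm]
  exact Finset.sum_congr rfl fun b _ => move1_5 _

lemma move1_7 (f : α → α → α → α → α → α → α → ℂ) :
    ∑ a, ∑ b, ∑ c, ∑ d, ∑ e, ∑ g, ∑ h, f a b c d e g h
      = ∑ b, ∑ c, ∑ d, ∑ e, ∑ g, ∑ h, ∑ a, f a b c d e g h := by
  rw [Finset.sum_comm]
  exact Finset.sum_congr rfl fun b _ => move1_6 _

lemma col5_45 [DecidableEq α] (g : α → α → α → α → α → ℂ) (p q : α) :
    ∑ c, ∑ d, ∑ y, ∑ w, ∑ x, g c d y w x * (if p = x ∧ q = w then 1 else 0)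
      = ∑ c, ∑ d, ∑ y, g c d y q p := by
  simp [mul_ite, ite_and, Finset.sum_ite_irrel, Finset.sum_const_zero, Finset.sum_ite_eq,
    Finset.sum_ite_eq']

lemma col3_23 [DecidableEq α] (g : α → α → α → ℂ) (p q : α) :
    ∑ a, ∑ f, ∑ y, g a f y * (if y = p ∧ f = q then 1 else 0) = ∑ a, g a q p := by
  simp [mul_ite, ite_and, Finset.sum_ite_irrel, Finset.sum_const_zero, Finset.sum_ite_eq,
    Finset.sum_ite_eq']

lemma col5_13 [DecidableEq α] (g : α → α → α → α → α → ℂ) (p q : α) :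
    ∑ c, ∑ d, ∑ y, ∑ e, ∑ k, g c d y e k * (if p = y ∧ q = c then 1 else 0)
      = ∑ d, ∑ e, ∑ k, g q d p e k := by
  simp [mul_ite, ite_and, Finset.sum_ite_irrel, Finset.sum_const_zero, Finset.sum_ite_eq,
    Finset.sum_ite_eq']

lemma col2_trace [DecidableEq α] (g : α → α → ℂ) (P : Prop) [Decidable P] :
    ∑ e, ∑ k, g e k * (if P ∧ e = k then 1 else 0) = (if P then 1 else 0) * ∑ e, g e e := by
  simp [mul_ite, ite_and, Finset.sum_ite_irrel, Finset.sum_const_zero, Finset.sum_ite_eq,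
    Finset.sum_ite_eq', Finset.mul_sum]

end helpers

lemma chainC1 (R : Mat2 n) (hq : QYB R) (hbi : IsUnit (t2 R)) (a b d1 c1 e f : Fin n) :
    ∑ y, R (a, b) (c1, y) * R (y, d1) (e, f)
      = ∑ c, ∑ d, ∑ y, ∑ w, ∑ x,
          R (b, c) (y, w) * R (a, w) (x, f) * R (x, y) (d, e) * Rtil R (d, d1) (c1, c) := by
  symm
  calc
    ∑ c, ∑ d, ∑ y, ∑ w, ∑ x,
        R (b, c) (y, w) * R (a, w) (x, f) * R (x, y) (d, e) * Rtil R (d, d1) (c1, c)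
      = ∑ c, ∑ d, (∑ y, ∑ w, ∑ x, R (b, c) (y, w) * R (a, w) (x, f) * R (x, y) (d, e))
          * Rtil R (d, d1) (c1, c) := by
        refine Finset.sum_congr rfl fun c _ => Finset.sum_congr rfl fun d _ => ?_
        simp only [Finset.sum_mul]
    _ = ∑ c, ∑ d, (∑ p, ∑ y, ∑ z, R (a, b) (p, y) * R (p, c) (d, z) * R (y, z) (e, f))
          * Rtil R (d, d1) (c1, c) := by
        refine Finset.sum_congr rfl fun c _ => Finset.sum_congr rfl fun d _ => ?_
        rw [star R hq]
    _ = ∑ c, ∑ d, ∑ p, ∑ y, ∑ z, R (a, b) (p, y) * R (y, z) (e, f)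
          * (R (p, c) (d, z) * Rtil R (d, d1) (c1, c)) := by
        refine Finset.sum_congr rfl fun c _ => Finset.sum_congr rfl fun d _ => ?_
        rw [Finset.sum_mul]
        refine Finset.sum_congr rfl fun p _ => ?_
        rw [Finset.sum_mul]
        refine Finset.sum_congr rfl fun y _ => ?_
        rw [Finset.sum_mul]
        exact Finset.sum_congr rfl fun z _ => by ring
    _ = ∑ p, ∑ y, ∑ z, ∑ c, ∑ d, R (a, b) (p, y) * R (y, z) (e, f)
          * (R (p, c) (d, z) * Rtil R (d, d1) (c1, c)) := by
        rw [move1_5, move1_5]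
    _ = ∑ p, ∑ y, ∑ z, R (a, b) (p, y) * R (y, z) (e, f)
          * ∑ c, ∑ d, R (p, c) (d, z) * Rtil R (d, d1) (c1, c) := by
        refine Finset.sum_congr rfl fun p _ => Finset.sum_congr rfl fun y _ =>
          Finset.sum_congr rfl fun z _ => ?_
        simp only [← Finset.mul_sum]
    _ = ∑ p, ∑ y, ∑ z, R (a, b) (p, y) * R (y, z) (e, f)
          * (if p = c1 ∧ z = d1 then 1 else 0) := by
        refine Finset.sum_congr rfl fun p _ => Finset.sum_congr rfl fun y _ =>
          Finset.sum_congr rfl fun z _ => ?_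
        rw [Finset.sum_comm, relM R hbi]
    _ = ∑ y, R (a, b) (c1, y) * R (y, d1) (e, f) :=
        col3_13 (fun p y z => R (a, b) (p, y) * R (y, z) (e, f)) c1 d1

lemma chainC2 (R : Mat2 n) (hq : QYB R) (hbi : IsUnit (t2 R)) (b d1 f1 c1 e f2 : Fin n) :
    ∑ a, ∑ f, ∑ y, Rtil R (f1, f) (a, f2) * R (a, b) (c1, y) * R (y, d1) (e, f)
      = ∑ c, ∑ d, ∑ y, R (b, c) (y, f2) * R (f1, y) (d, e) * Rtil R (d, d1) (c1, c) := by
  calc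
    ∑ a, ∑ f, ∑ y, Rtil R (f1, f) (a, f2) * R (a, b) (c1, y) * R (y, d1) (e, f)
      = ∑ a, ∑ f, Rtil R (f1, f) (a, f2) * ∑ y, R (a, b) (c1, y) * R (y, d1) (e, f) := by
        refine Finset.sum_congr rfl fun a _ => Finset.sum_congr rfl fun f _ => ?_
        simp only [mul_assoc, ← Finset.mul_sum]
    _ = ∑ a, ∑ f, Rtil R (f1, f) (a, f2) * ∑ c, ∑ d, ∑ y, ∑ w, ∑ x,
          R (b, c) (y, w) * R (a, w) (x, f) * R (x, y) (d, e) * Rtil R (d, d1) (c1, c) := by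
        refine Finset.sum_congr rfl fun a _ => Finset.sum_congr rfl fun f _ => ?_
        rw [chainC1 R hq hbi]
    _ = ∑ a, ∑ f, ∑ c, ∑ d, ∑ y, ∑ w, ∑ x,
          R (b, c) (y, w) * R (x, y) (d, e) * Rtil R (d, d1) (c1, c)
            * (Rtil R (f1, f) (a, f2) * R (a, w) (x, f)) := by
        refine Finset.sum_congr rfl fun a _ => Finset.sum_congr rfl fun f _ => ?_
        simp only [Finset.mul_sum]
        exact Finset.sum_congr rfl fun c _ => Finset.sum_congr rfl fun d _ =>
          Finset.sum_congr rfl fun y _ => Finset.sum_congr rfl fun w _ =>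
          Finset.sum_congr rfl fun x _ => by ring
    _ = ∑ c, ∑ d, ∑ y, ∑ w, ∑ x, ∑ a, ∑ f,
          R (b, c) (y, w) * R (x, y) (d, e) * Rtil R (d, d1) (c1, c)
            * (Rtil R (f1, f) (a, f2) * R (a, w) (x, f)) := by
        rw [move1_7, move1_7]
    _ = ∑ c, ∑ d, ∑ y, ∑ w, ∑ x,
          R (b, c) (y, w) * R (x, y) (d, e) * Rtil R (d, d1) (c1, c)
            * (if f1 = x ∧ f2 = w then 1 else 0) := by
        refine Finset.sum_congr rfl fun c _ => Finset.sum_congr rfl fun d _ =>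
          Finset.sum_congr rfl fun y _ => Finset.sum_congr rfl fun w _ =>
          Finset.sum_congr rfl fun x _ => ?_
        simp only [← Finset.mul_sum]
        congr 1
        exact relL R hbi f1 f2 x w
    _ = ∑ c, ∑ d, ∑ y, R (b, c) (y, f2) * R (f1, y) (d, e) * Rtil R (d, d1) (c1, c) :=
        col5_45 (fun c d y w x => R (b, c) (y, w) * R (x, y) (d, e) * Rtil R (d, d1) (c1, c))
          f1 f2

lemma chainC3 (R : Mat2 n) (hq : QYB R) (hbi : IsUnit (t2 R)) (b e1 f1 c1 d2 f2 : Fin n) :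
    ∑ a, Rtil R (f1, e1) (a, f2) * R (a, b) (c1, d2)
      = ∑ c, ∑ d, ∑ y, ∑ e, ∑ k, R (b, c) (y, f2) * R (f1, y) (d, e)
          * Rtil R (e, e1) (d2, k) * Rtil R (d, k) (c1, c) := by
  symm
  calc
    ∑ c, ∑ d, ∑ y, ∑ e, ∑ k, R (b, c) (y, f2) * R (f1, y) (d, e)
        * Rtil R (e, e1) (d2, k) * Rtil R (d, k) (c1, c)
      = ∑ e, ∑ k, ∑ c, ∑ d, ∑ y, R (b, c) (y, f2) * R (f1, y) (d, e)
          * Rtil R (e, e1) (d2, k) * Rtil R (d, k) (c1, c) := by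
        rw [move1_5, move1_5, move1_5]
    _ = ∑ e, ∑ k, (∑ c, ∑ d, ∑ y, R (b, c) (y, f2) * R (f1, y) (d, e) * Rtil R (d, k) (c1, c))
          * Rtil R (e, e1) (d2, k) := by
        refine Finset.sum_congr rfl fun e _ => Finset.sum_congr rfl fun k _ => ?_
        simp only [Finset.sum_mul]
        exact Finset.sum_congr rfl fun c _ => Finset.sum_congr rfl fun d _ =>
          Finset.sum_congr rfl fun y _ => by ring
    _ = ∑ e, ∑ k, (∑ a, ∑ f, ∑ y, Rtil R (f1, f) (a, f2) * R (a, b) (c1, y) * R (y, k) (e, f))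
          * Rtil R (e, e1) (d2, k) := by
        refine Finset.sum_congr rfl fun e _ => Finset.sum_congr rfl fun k _ => ?_
        rw [chainC2 R hq hbi b k f1 c1 e f2]
    _ = ∑ e, ∑ k, ∑ a, ∑ f, ∑ y, Rtil R (f1, f) (a, f2) * R (a, b) (c1, y)
          * (R (y, k) (e, f) * Rtil R (e, e1) (d2, k)) := by
        refine Finset.sum_congr rfl fun e _ => Finset.sum_congr rfl fun k _ => ?_
        simp only [Finset.sum_mul]
        exact Finset.sum_congr rfl fun a _ => Finset.sum_congr rfl fun f _ =>
          Finset.sum_congr rfl fun y _ => by ring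
    _ = ∑ a, ∑ f, ∑ y, ∑ e, ∑ k, Rtil R (f1, f) (a, f2) * R (a, b) (c1, y)
          * (R (y, k) (e, f) * Rtil R (e, e1) (d2, k)) := by
        rw [move1_5, move1_5]
    _ = ∑ a, ∑ f, ∑ y, Rtil R (f1, f) (a, f2) * R (a, b) (c1, y)
          * (if y = d2 ∧ f = e1 then 1 else 0) := by
        refine Finset.sum_congr rfl fun a _ => Finset.sum_congr rfl fun f _ =>
          Finset.sum_congr rfl fun y _ => ?_
        simp only [← Finset.mul_sum]
        congr 1
        exact relM R hbi y f d2 e1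
    _ = ∑ a, Rtil R (f1, e1) (a, f2) * R (a, b) (c1, d2) :=
        col3_23 (fun a f y => Rtil R (f1, f) (a, f2) * R (a, b) (c1, y)) d2 e1

lemma chainC4 (R : Mat2 n) (hq : QYB R) (hbi : IsUnit (t2 R)) (g f1 e1 h c1 d2 : Fin n) :
    ∑ a, ∑ b, ∑ f, Rtil R (g, f) (b, h) * Rtil R (f1, e1) (a, f) * R (a, b) (c1, d2)
      = ∑ d, ∑ e, ∑ k, R (f1, g) (d, e) * Rtil R (e, e1) (d2, k) * Rtil R (d, k) (c1, h) := by
  calc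
    ∑ a, ∑ b, ∑ f, Rtil R (g, f) (b, h) * Rtil R (f1, e1) (a, f) * R (a, b) (c1, d2)
      = ∑ b, ∑ f, ∑ a, Rtil R (g, f) (b, h) * Rtil R (f1, e1) (a, f) * R (a, b) (c1, d2) := by
        rw [move1_3]
    _ = ∑ b, ∑ f, Rtil R (g, f) (b, h) * ∑ a, Rtil R (f1, e1) (a, f) * R (a, b) (c1, d2) := by
        refine Finset.sum_congr rfl fun b _ => Finset.sum_congr rfl fun f _ => ?_
        simp only [mul_assoc, ← Finset.mul_sum]
    _ = ∑ b, ∑ f, Rtil R (g, f) (b, h) * ∑ c, ∑ d, ∑ y, ∑ e, ∑ k,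
          R (b, c) (y, f) * R (f1, y) (d, e) * Rtil R (e, e1) (d2, k) * Rtil R (d, k) (c1, c) := by
        refine Finset.sum_congr rfl fun b _ => Finset.sum_congr rfl fun f _ => ?_
        rw [chainC3 R hq hbi b e1 f1 c1 d2 f]
    _ = ∑ b, ∑ f, ∑ c, ∑ d, ∑ y, ∑ e, ∑ k,
          R (f1, y) (d, e) * Rtil R (e, e1) (d2, k) * Rtil R (d, k) (c1, c)
            * (Rtil R (g, f) (b, h) * R (b, c) (y, f)) := by
        refine Finset.sum_congr rfl fun b _ => Finset.sum_congr rfl fun f _ => ?_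
        simp only [Finset.mul_sum]
        exact Finset.sum_congr rfl fun c _ => Finset.sum_congr rfl fun d _ =>
          Finset.sum_congr rfl fun y _ => Finset.sum_congr rfl fun e _ =>
          Finset.sum_congr rfl fun k _ => by ring
    _ = ∑ c, ∑ d, ∑ y, ∑ e, ∑ k, ∑ b, ∑ f,
          R (f1, y) (d, e) * Rtil R (e, e1) (d2, k) * Rtil R (d, k) (c1, c)
            * (Rtil R (g, f) (b, h) * R (b, c) (y, f)) := by
        rw [move1_7, move1_7]
    _ = ∑ c, ∑ d, ∑ y, ∑ e, ∑ k,
          R (f1, y) (d, e) * Rtil R (e, e1) (d2, k) * Rtil R (d, k) (c1, c)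
            * (if g = y ∧ h = c then 1 else 0) := by
        refine Finset.sum_congr rfl fun c _ => Finset.sum_congr rfl fun d _ =>
          Finset.sum_congr rfl fun y _ => Finset.sum_congr rfl fun e _ =>
          Finset.sum_congr rfl fun k _ => ?_
        simp only [← Finset.mul_sum]
        congr 1
        exact relL R hbi g h y c
    _ = ∑ d, ∑ e, ∑ k, R (f1, g) (d, e) * Rtil R (e, e1) (d2, k) * Rtil R (d, k) (c1, h) :=
        col5_13 (fun c d y e k => R (f1, y) (d, e) * Rtil R (e, e1) (d2, k)
          * Rtil R (d, k) (c1, c)) g h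

lemma chainF1e (R : Mat2 n) (hq : QYB R) (hbi : IsUnit (t2 R)) (f1 e1 c1 d2 : Fin n) :
    ∑ a, ∑ b, ∑ f, Umat R f b * Rtil R (f1, e1) (a, f) * R (a, b) (c1, d2)
      = (if f1 = c1 then 1 else 0) * Umat R e1 d2 := by
  calc
    ∑ a, ∑ b, ∑ f, Umat R f b * Rtil R (f1, e1) (a, f) * R (a, b) (c1, d2)
      = ∑ a, ∑ b, ∑ f, ∑ h, Rtil R (h, f) (b, h) * Rtil R (f1, e1) (a, f) * R (a, b) (c1, d2) := by
        refine Finset.sum_congr rfl fun a _ => Finset.sum_congr rfl fun b _ =>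
          Finset.sum_congr rfl fun f _ => ?_
        simp only [Umat, Matrix.of_apply, Finset.sum_mul]
    _ = ∑ h, ∑ a, ∑ b, ∑ f, Rtil R (h, f) (b, h) * Rtil R (f1, e1) (a, f) * R (a, b) (c1, d2) := by
        rw [← move1_4]
    _ = ∑ h, ∑ d, ∑ e, ∑ k, R (f1, h) (d, e) * Rtil R (e, e1) (d2, k) * Rtil R (d, k) (c1, h) := by
        exact Finset.sum_congr rfl fun h _ => chainC4 R hq hbi h f1 e1 h c1 d2
    _ = ∑ d, ∑ e, ∑ k, ∑ h, R (f1, h) (d, e) * Rtil R (e, e1) (d2, k) * Rtil R (d, k) (c1, h) := by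
        rw [move1_4]
    _ = ∑ e, ∑ k, ∑ d, ∑ h, R (f1, h) (d, e) * Rtil R (e, e1) (d2, k) * Rtil R (d, k) (c1, h) := by
        rw [move1_3 (fun d e k => ∑ h, R (f1, h) (d, e) * Rtil R (e, e1) (d2, k)
          * Rtil R (d, k) (c1, h))]
    _ = ∑ e, ∑ k, Rtil R (e, e1) (d2, k)
          * ∑ d, ∑ h, R (f1, h) (d, e) * Rtil R (d, k) (c1, h) := by
        refine Finset.sum_congr rfl fun e _ => Finset.sum_congr rfl fun k _ => ?_
        rw [Finset.mul_sum]
        refine Finset.sum_congr rfl fun d _ => ?_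
        rw [Finset.mul_sum]
        exact Finset.sum_congr rfl fun h _ => by ring
    _ = ∑ e, ∑ k, Rtil R (e, e1) (d2, k) * (if f1 = c1 ∧ e = k then 1 else 0) := by
        refine Finset.sum_congr rfl fun e _ => Finset.sum_congr rfl fun k _ => ?_
        rw [relM R hbi f1 e c1 k]
    _ = (if f1 = c1 then 1 else 0) * ∑ e, Rtil R (e, e1) (d2, e) :=
        col2_trace (fun e k => Rtil R (e, e1) (d2, k)) (f1 = c1)
    _ = (if f1 = c1 then 1 else 0) * Umat R e1 d2 := by
        simp [Umat]

lemma F1m (R : Mat2 n) (hq : QYB R) (hbi : IsUnit (t2 R)) :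
    Rtil R * kron 1 (Umat R) * R = kron 1 (Umat R) := by
  ext p q
  obtain ⟨f1, e1⟩ := p
  obtain ⟨c1, d2⟩ := q
  rw [mul2_apply]
  have h1 : ∀ a b, (Rtil R * kron 1 (Umat R)) (f1, e1) (a, b)
      = ∑ f, Rtil R (f1, e1) (a, f) * Umat R f b := by
    intro a b
    rw [mul2_apply]
    simp only [kron, Matrix.of_apply, Matrix.one_apply, ite_mul, one_mul, zero_mul, mul_ite,
      mul_zero, mul_one, Finset.sum_ite_irrel, Finset.sum_const_zero, Finset.sum_ite_eq,
      Finset.sum_ite_eq', Finset.mem_univ, if_true]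
  calc
    ∑ a, ∑ b, (Rtil R * kron 1 (Umat R)) (f1, e1) (a, b) * R (a, b) (c1, d2)
      = ∑ a, ∑ b, ∑ f, Umat R f b * Rtil R (f1, e1) (a, f) * R (a, b) (c1, d2) := by
        refine Finset.sum_congr rfl fun a _ => Finset.sum_congr rfl fun b _ => ?_
        rw [h1, Finset.sum_mul]
        exact Finset.sum_congr rfl fun f _ => by ring
    _ = (if f1 = c1 then 1 else 0) * Umat R e1 d2 := chainF1e R hq hbi f1 e1 c1 d2
    _ = kron 1 (Umat R) (f1, e1) (c1, d2) := by
        simp [kron, Matrix.one_apply]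

section helpers2
variable {α : Type*} [Fintype α] [DecidableEq α]

lemma col3_23b (g : α → α → α → ℂ) (p q : α) :
    ∑ y, ∑ w, ∑ x, g y w x * (if p = x ∧ q = w then 1 else 0) = ∑ y, g y q p := by
  simp [mul_ite, ite_and, Finset.sum_ite_irrel, Finset.sum_const_zero, Finset.sum_ite_eq,
    Finset.sum_ite_eq']

lemma col5_35b (g : α → α → α → α → α → ℂ) (p q : α) :
    ∑ c, ∑ d, ∑ w, ∑ y, ∑ x, g c d w y x * (if w = p ∧ x = q then 1 else 0)
      = ∑ c, ∑ d, ∑ y, g c d p y q := by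
  simp [mul_ite, ite_and, Finset.sum_ite_irrel, Finset.sum_const_zero, Finset.sum_ite_eq,
    Finset.sum_ite_eq']

lemma col3_13b (g : α → α → α → ℂ) (p q : α) :
    ∑ f, ∑ a, ∑ y, g f a y * (if p = f ∧ q = y then 1 else 0) = ∑ a, g p a q := by
  simp [mul_ite, ite_and, Finset.sum_ite_irrel, Finset.sum_const_zero, Finset.sum_ite_eq,
    Finset.sum_ite_eq']

lemma col5_13b (g : α → α → α → α → α → ℂ) (p q : α) :
    ∑ c, ∑ d, ∑ y, ∑ e, ∑ k, g c d y e k * (if c = q ∧ y = p then 1 else 0)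
      = ∑ d, ∑ e, ∑ k, g q d p e k := by
  simp [mul_ite, ite_and, Finset.sum_ite_irrel, Finset.sum_const_zero, Finset.sum_ite_eq,
    Finset.sum_ite_eq']

lemma col2_traceb (g : α → α → ℂ) (P : Prop) [Decidable P] :
    ∑ e, ∑ k, g e k * (if k = e ∧ P then 1 else 0) = (if P then 1 else 0) * ∑ e, g e e := by
  simp [mul_ite, ite_and, Finset.sum_ite_irrel, Finset.sum_const_zero, Finset.sum_ite_eq,
    Finset.sum_ite_eq', Finset.mul_sum]

end helpers2

lemma chainD1 (R : Mat2 n) (hq : QYB R) (hbi : IsUnit (t2 R)) (a b d1 c1 e f : Fin n) :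
    ∑ y, R (b, a) (y, c1) * R (d1, y) (f, e)
      = ∑ c, ∑ d, ∑ w, ∑ y, ∑ x,
          R (c, b) (w, y) * R (w, a) (f, x) * R (y, x) (e, d) * Rtil R (d1, d) (c, c1) := by
  symm
  calc
    ∑ c, ∑ d, ∑ w, ∑ y, ∑ x,
        R (c, b) (w, y) * R (w, a) (f, x) * R (y, x) (e, d) * Rtil R (d1, d) (c, c1)
      = ∑ c, ∑ d, (∑ w, ∑ y, ∑ x, R (c, b) (w, y) * R (w, a) (f, x) * R (y, x) (e, d))
          * Rtil R (d1, d) (c, c1) := by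
        refine Finset.sum_congr rfl fun c _ => Finset.sum_congr rfl fun d _ => ?_
        simp only [Finset.sum_mul]
    _ = ∑ c, ∑ d, (∑ y, ∑ w, ∑ x, R (b, a) (y, w) * R (c, w) (x, d) * R (x, y) (f, e))
          * Rtil R (d1, d) (c, c1) := by
        refine Finset.sum_congr rfl fun c _ => Finset.sum_congr rfl fun d _ => ?_
        rw [star R hq c b a f e d]
    _ = ∑ c, ∑ d, ∑ y, ∑ w, ∑ x, R (b, a) (y, w) * R (x, y) (f, e)
          * (Rtil R (d1, d) (c, c1) * R (c, w) (x, d)) := by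
        refine Finset.sum_congr rfl fun c _ => Finset.sum_congr rfl fun d _ => ?_
        rw [Finset.sum_mul]
        refine Finset.sum_congr rfl fun y _ => ?_
        rw [Finset.sum_mul]
        refine Finset.sum_congr rfl fun w _ => ?_
        rw [Finset.sum_mul]
        exact Finset.sum_congr rfl fun x _ => by ring
    _ = ∑ y, ∑ w, ∑ x, ∑ c, ∑ d, R (b, a) (y, w) * R (x, y) (f, e)
          * (Rtil R (d1, d) (c, c1) * R (c, w) (x, d)) := by
        rw [move1_5, move1_5]
    _ = ∑ y, ∑ w, ∑ x, R (b, a) (y, w) * R (x, y) (f, e)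
          * ∑ c, ∑ d, Rtil R (d1, d) (c, c1) * R (c, w) (x, d) := by
        refine Finset.sum_congr rfl fun y _ => Finset.sum_congr rfl fun w _ =>
          Finset.sum_congr rfl fun x _ => ?_
        simp only [← Finset.mul_sum]
    _ = ∑ y, ∑ w, ∑ x, R (b, a) (y, w) * R (x, y) (f, e)
          * (if d1 = x ∧ c1 = w then 1 else 0) := by
        refine Finset.sum_congr rfl fun y _ => Finset.sum_congr rfl fun w _ =>
          Finset.sum_congr rfl fun x _ => ?_
        rw [relL R hbi d1 c1 x w]
    _ = ∑ y, R (b, a) (y, c1) * R (d1, y) (f, e) :=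
        col3_23b (fun y w x => R (b, a) (y, w) * R (x, y) (f, e)) d1 c1

lemma chainD2 (R : Mat2 n) (hq : QYB R) (hbi : IsUnit (t2 R)) (b d1 f1 c1 e f2 : Fin n) :
    ∑ a, ∑ f, ∑ y, Rtil R (f, f1) (f2, a) * R (b, a) (y, c1) * R (d1, y) (f, e)
      = ∑ c, ∑ d, ∑ y, R (c, b) (f2, y) * R (y, f1) (e, d) * Rtil R (d1, d) (c, c1) := by
  calc
    ∑ a, ∑ f, ∑ y, Rtil R (f, f1) (f2, a) * R (b, a) (y, c1) * R (d1, y) (f, e)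
      = ∑ a, ∑ f, Rtil R (f, f1) (f2, a) * ∑ y, R (b, a) (y, c1) * R (d1, y) (f, e) := by
        refine Finset.sum_congr rfl fun a _ => Finset.sum_congr rfl fun f _ => ?_
        simp only [mul_assoc, ← Finset.mul_sum]
    _ = ∑ a, ∑ f, Rtil R (f, f1) (f2, a) * ∑ c, ∑ d, ∑ w, ∑ y, ∑ x,
          R (c, b) (w, y) * R (w, a) (f, x) * R (y, x) (e, d) * Rtil R (d1, d) (c, c1) := by
        refine Finset.sum_congr rfl fun a _ => Finset.sum_congr rfl fun f _ => ?_
        rw [chainD1 R hq hbi a b d1 c1 e f]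
    _ = ∑ a, ∑ f, ∑ c, ∑ d, ∑ w, ∑ y, ∑ x,
          R (c, b) (w, y) * R (y, x) (e, d) * Rtil R (d1, d) (c, c1)
            * (R (w, a) (f, x) * Rtil R (f, f1) (f2, a)) := by
        refine Finset.sum_congr rfl fun a _ => Finset.sum_congr rfl fun f _ => ?_
        simp only [Finset.mul_sum]
        exact Finset.sum_congr rfl fun c _ => Finset.sum_congr rfl fun d _ =>
          Finset.sum_congr rfl fun w _ => Finset.sum_congr rfl fun y _ =>
          Finset.sum_congr rfl fun x _ => by ring
    _ = ∑ c, ∑ d, ∑ w, ∑ y, ∑ x, ∑ a, ∑ f,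
          R (c, b) (w, y) * R (y, x) (e, d) * Rtil R (d1, d) (c, c1)
            * (R (w, a) (f, x) * Rtil R (f, f1) (f2, a)) := by
        rw [move1_7, move1_7]
    _ = ∑ c, ∑ d, ∑ w, ∑ y, ∑ x,
          R (c, b) (w, y) * R (y, x) (e, d) * Rtil R (d1, d) (c, c1)
            * (if w = f2 ∧ x = f1 then 1 else 0) := by
        refine Finset.sum_congr rfl fun c _ => Finset.sum_congr rfl fun d _ =>
          Finset.sum_congr rfl fun w _ => Finset.sum_congr rfl fun y _ =>
          Finset.sum_congr rfl fun x _ => ?_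
        simp only [← Finset.mul_sum]
        congr 1
        rw [Finset.sum_comm]
        exact relM R hbi w x f2 f1
    _ = ∑ c, ∑ d, ∑ y, R (c, b) (f2, y) * R (y, f1) (e, d) * Rtil R (d1, d) (c, c1) :=
        col5_35b (fun c d w y x => R (c, b) (w, y) * R (y, x) (e, d) * Rtil R (d1, d) (c, c1))
          f2 f1

lemma chainD3 (R : Mat2 n) (hq : QYB R) (hbi : IsUnit (t2 R)) (b e1 f1 c1 d2 f2 : Fin n) :
    ∑ a, Rtil R (e1, f1) (f2, a) * R (b, a) (d2, c1)
      = ∑ c, ∑ d, ∑ y, ∑ e, ∑ k, R (c, b) (f2, y) * R (y, f1) (e, d)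
          * Rtil R (e1, e) (k, d2) * Rtil R (k, d) (c, c1) := by
  symm
  calc
    ∑ c, ∑ d, ∑ y, ∑ e, ∑ k, R (c, b) (f2, y) * R (y, f1) (e, d)
        * Rtil R (e1, e) (k, d2) * Rtil R (k, d) (c, c1)
      = ∑ e, ∑ k, ∑ c, ∑ d, ∑ y, R (c, b) (f2, y) * R (y, f1) (e, d)
          * Rtil R (e1, e) (k, d2) * Rtil R (k, d) (c, c1) := by
        rw [move1_5, move1_5, move1_5]
    _ = ∑ k, ∑ e, ∑ c, ∑ d, ∑ y, R (c, b) (f2, y) * R (y, f1) (e, d)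
          * Rtil R (e1, e) (k, d2) * Rtil R (k, d) (c, c1) := by
        rw [Finset.sum_comm]
    _ = ∑ k, ∑ e, (∑ c, ∑ d, ∑ y, R (c, b) (f2, y) * R (y, f1) (e, d) * Rtil R (k, d) (c, c1))
          * Rtil R (e1, e) (k, d2) := by
        refine Finset.sum_congr rfl fun k _ => Finset.sum_congr rfl fun e _ => ?_
        simp only [Finset.sum_mul]
        exact Finset.sum_congr rfl fun c _ => Finset.sum_congr rfl fun d _ =>
          Finset.sum_congr rfl fun y _ => by ring
    _ = ∑ k, ∑ e, (∑ a, ∑ f, ∑ y, Rtil R (f, f1) (f2, a) * R (b, a) (y, c1) * R (k, y) (f, e))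
          * Rtil R (e1, e) (k, d2) := by
        refine Finset.sum_congr rfl fun k _ => Finset.sum_congr rfl fun e _ => ?_
        rw [chainD2 R hq hbi b k f1 c1 e f2]
    _ = ∑ k, ∑ e, ∑ a, ∑ f, ∑ y, Rtil R (f, f1) (f2, a) * R (b, a) (y, c1)
          * (Rtil R (e1, e) (k, d2) * R (k, y) (f, e)) := by
        refine Finset.sum_congr rfl fun k _ => Finset.sum_congr rfl fun e _ => ?_
        simp only [Finset.sum_mul]
        exact Finset.sum_congr rfl fun a _ => Finset.sum_congr rfl fun f _ =>
          Finset.sum_congr rfl fun y _ => by ring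
    _ = ∑ a, ∑ f, ∑ y, ∑ k, ∑ e, Rtil R (f, f1) (f2, a) * R (b, a) (y, c1)
          * (Rtil R (e1, e) (k, d2) * R (k, y) (f, e)) := by
        rw [move1_5, move1_5]
    _ = ∑ a, ∑ f, ∑ y, Rtil R (f, f1) (f2, a) * R (b, a) (y, c1)
          * (if e1 = f ∧ d2 = y then 1 else 0) := by
        refine Finset.sum_congr rfl fun a _ => Finset.sum_congr rfl fun f _ =>
          Finset.sum_congr rfl fun y _ => ?_
        simp only [← Finset.mul_sum]
        congr 1
        exact relL R hbi e1 d2 f y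
    _ = ∑ a, Rtil R (e1, f1) (f2, a) * R (b, a) (d2, c1) := by
        rw [Finset.sum_comm]
        exact col3_13b (fun f a y => Rtil R (f, f1) (f2, a) * R (b, a) (y, c1)) e1 d2

lemma chainD4 (R : Mat2 n) (hq : QYB R) (hbi : IsUnit (t2 R)) (g f1 e1 h c1 d2 : Fin n) :
    ∑ a, ∑ b, ∑ f, Rtil R (f, g) (h, b) * Rtil R (e1, f1) (f, a) * R (b, a) (d2, c1)
      = ∑ d, ∑ e, ∑ k, R (g, f1) (e, d) * Rtil R (e1, e) (k, d2) * Rtil R (k, d) (h, c1) := by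
  calc
    ∑ a, ∑ b, ∑ f, Rtil R (f, g) (h, b) * Rtil R (e1, f1) (f, a) * R (b, a) (d2, c1)
      = ∑ b, ∑ f, ∑ a, Rtil R (f, g) (h, b) * Rtil R (e1, f1) (f, a) * R (b, a) (d2, c1) := by
        rw [move1_3]
    _ = ∑ f, ∑ b, ∑ a, Rtil R (f, g) (h, b) * Rtil R (e1, f1) (f, a) * R (b, a) (d2, c1) := by
        rw [Finset.sum_comm]
    _ = ∑ f, ∑ b, Rtil R (f, g) (h, b) * ∑ a, Rtil R (e1, f1) (f, a) * R (b, a) (d2, c1) := by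
        refine Finset.sum_congr rfl fun f _ => Finset.sum_congr rfl fun b _ => ?_
        simp only [mul_assoc, ← Finset.mul_sum]
    _ = ∑ f, ∑ b, Rtil R (f, g) (h, b) * ∑ c, ∑ d, ∑ y, ∑ e, ∑ k,
          R (c, b) (f, y) * R (y, f1) (e, d) * Rtil R (e1, e) (k, d2) * Rtil R (k, d) (c, c1) := by
        refine Finset.sum_congr rfl fun f _ => Finset.sum_congr rfl fun b _ => ?_
        rw [chainD3 R hq hbi b e1 f1 c1 d2 f]
    _ = ∑ f, ∑ b, ∑ c, ∑ d, ∑ y, ∑ e, ∑ k,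
          R (y, f1) (e, d) * Rtil R (e1, e) (k, d2) * Rtil R (k, d) (c, c1)
            * (R (c, b) (f, y) * Rtil R (f, g) (h, b)) := by
        refine Finset.sum_congr rfl fun f _ => Finset.sum_congr rfl fun b _ => ?_
        simp only [Finset.mul_sum]
        exact Finset.sum_congr rfl fun c _ => Finset.sum_congr rfl fun d _ =>
          Finset.sum_congr rfl fun y _ => Finset.sum_congr rfl fun e _ =>
          Finset.sum_congr rfl fun k _ => by ring
    _ = ∑ c, ∑ d, ∑ y, ∑ e, ∑ k, ∑ f, ∑ b,
          R (y, f1) (e, d) * Rtil R (e1, e) (k, d2) * Rtil R (k, d) (c, c1)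
            * (R (c, b) (f, y) * Rtil R (f, g) (h, b)) := by
        rw [move1_7, move1_7]
    _ = ∑ c, ∑ d, ∑ y, ∑ e, ∑ k,
          R (y, f1) (e, d) * Rtil R (e1, e) (k, d2) * Rtil R (k, d) (c, c1)
            * (if c = h ∧ y = g then 1 else 0) := by
        refine Finset.sum_congr rfl fun c _ => Finset.sum_congr rfl fun d _ =>
          Finset.sum_congr rfl fun y _ => Finset.sum_congr rfl fun e _ =>
          Finset.sum_congr rfl fun k _ => ?_
        simp only [← Finset.mul_sum]
        congr 1
        exact relM R hbi c y h g
    _ = ∑ d, ∑ e, ∑ k, R (g, f1) (e, d) * Rtil R (e1, e) (k, d2) * Rtil R (k, d) (h, c1) :=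
        col5_13b (fun c d y e k => R (y, f1) (e, d) * Rtil R (e1, e) (k, d2)
          * Rtil R (k, d) (c, c1)) g h

lemma chainF2e (R : Mat2 n) (hq : QYB R) (hbi : IsUnit (t2 R)) (f1 e1 c1 d2 : Fin n) :
    ∑ a, ∑ b, ∑ f, Vmat R f b * Rtil R (e1, f1) (f, a) * R (b, a) (d2, c1)
      = (if f1 = c1 then 1 else 0) * Vmat R e1 d2 := by
  calc
    ∑ a, ∑ b, ∑ f, Vmat R f b * Rtil R (e1, f1) (f, a) * R (b, a) (d2, c1)
      = ∑ a, ∑ b, ∑ f, ∑ h, Rtil R (f, h) (h, b) * Rtil R (e1, f1) (f, a) * R (b, a) (d2, c1) := by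
        refine Finset.sum_congr rfl fun a _ => Finset.sum_congr rfl fun b _ =>
          Finset.sum_congr rfl fun f _ => ?_
        simp only [Vmat, Matrix.of_apply, Finset.sum_mul]
    _ = ∑ h, ∑ a, ∑ b, ∑ f, Rtil R (f, h) (h, b) * Rtil R (e1, f1) (f, a) * R (b, a) (d2, c1) := by
        rw [← move1_4]
    _ = ∑ h, ∑ d, ∑ e, ∑ k, R (h, f1) (e, d) * Rtil R (e1, e) (k, d2) * Rtil R (k, d) (h, c1) := by
        exact Finset.sum_congr rfl fun h _ => chainD4 R hq hbi h f1 e1 h c1 d2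
    _ = ∑ d, ∑ e, ∑ k, ∑ h, R (h, f1) (e, d) * Rtil R (e1, e) (k, d2) * Rtil R (k, d) (h, c1) := by
        rw [move1_4]
    _ = ∑ e, ∑ k, ∑ d, ∑ h, R (h, f1) (e, d) * Rtil R (e1, e) (k, d2) * Rtil R (k, d) (h, c1) := by
        rw [move1_3 (fun d e k => ∑ h, R (h, f1) (e, d) * Rtil R (e1, e) (k, d2)
          * Rtil R (k, d) (h, c1))]
    _ = ∑ e, ∑ k, Rtil R (e1, e) (k, d2)
          * ∑ h, ∑ d, Rtil R (k, d) (h, c1) * R (h, f1) (e, d) := by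
        refine Finset.sum_congr rfl fun e _ => Finset.sum_congr rfl fun k _ => ?_
        rw [Finset.mul_sum, Finset.sum_comm]
        refine Finset.sum_congr rfl fun d _ => ?_
        rw [Finset.mul_sum]
        exact Finset.sum_congr rfl fun h _ => by ring
    _ = ∑ e, ∑ k, Rtil R (e1, e) (k, d2) * (if k = e ∧ c1 = f1 then 1 else 0) := by
        refine Finset.sum_congr rfl fun e _ => Finset.sum_congr rfl fun k _ => ?_
        rw [relL R hbi k c1 e f1]
    _ = (if c1 = f1 then 1 else 0) * ∑ e, Rtil R (e1, e) (e, d2) :=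
        col2_traceb (fun e k => Rtil R (e1, e) (k, d2)) (c1 = f1)
    _ = (if f1 = c1 then 1 else 0) * Vmat R e1 d2 := by
        simp [Vmat, eq_comm]

lemma F2m (R : Mat2 n) (hq : QYB R) (hbi : IsUnit (t2 R)) :
    Rtil R * kron (Vmat R) 1 * R = kron (Vmat R) 1 := by
  ext p q
  obtain ⟨e1, f1⟩ := p
  obtain ⟨d2, c1⟩ := q
  rw [mul2_apply]
  have h1 : ∀ a b, (Rtil R * kron (Vmat R) 1) (e1, f1) (a, b)
      = ∑ x, Rtil R (e1, f1) (x, b) * Vmat R x a := by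
    intro a b
    rw [mul2_apply]
    simp only [kron, Matrix.of_apply, Matrix.one_apply, ite_mul, one_mul, zero_mul, mul_ite,
      mul_zero, mul_one, Finset.sum_ite_irrel, Finset.sum_const_zero, Finset.sum_ite_eq,
      Finset.sum_ite_eq', Finset.mem_univ, if_true]
  calc
    ∑ a, ∑ b, (Rtil R * kron (Vmat R) 1) (e1, f1) (a, b) * R (a, b) (d2, c1)
      = ∑ a, ∑ b, ∑ x, Vmat R x a * Rtil R (e1, f1) (x, b) * R (a, b) (d2, c1) := by
        refine Finset.sum_congr rfl fun a _ => Finset.sum_congr rfl fun b _ => ?_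
        rw [h1, Finset.sum_mul]
        exact Finset.sum_congr rfl fun x _ => by ring
    _ = ∑ b, ∑ a, ∑ x, Vmat R x a * Rtil R (e1, f1) (x, b) * R (a, b) (d2, c1) := by
        rw [Finset.sum_comm]
    _ = (if f1 = c1 then 1 else 0) * Vmat R e1 d2 := chainF2e R hq hbi f1 e1 c1 d2
    _ = kron (Vmat R) 1 (e1, f1) (d2, c1) := by
        simp [kron, Matrix.one_apply]

section transposeStuff
open Matrix
lemma isUnit_transpose_mat2 {A : Mat2 n} (h : IsUnit A) : IsUnit Aᵀ :=
  (Matrix.isUnit_iff_isUnit_det _).2 (by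
    rw [Matrix.det_transpose]; exact (Matrix.isUnit_iff_isUnit_det _).1 h)

lemma t2_transpose (A : Mat2 n) : t2 Aᵀ = (t2 A)ᵀ := by
  ext p q; simp [t2]

lemma Rtil_transpose (R : Mat2 n) : Rtil Rᵀ = (Rtil R)ᵀ := by
  unfold Rtil
  rw [t2_transpose, ← Matrix.transpose_nonsing_inv, t2_transpose]

lemma Umat_transpose (R : Mat2 n) : Umat Rᵀ = (Vmat R)ᵀ := by
  ext i j; simp [Umat, Vmat, Rtil_transpose]

lemma Vmat_transpose (R : Mat2 n) : Vmat Rᵀ = (Umat R)ᵀ := by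
  ext i j; simp [Umat, Vmat, Rtil_transpose]

lemma A12_transpose (A : Mat2 n) : A12 Aᵀ = (A12 A)ᵀ := by
  ext p q
  simp only [A12, Matrix.transpose_apply, Matrix.of_apply]
  congr 1
  simp only [eq_comm]

lemma A13_transpose (A : Mat2 n) : A13 Aᵀ = (A13 A)ᵀ := by
  ext p q
  simp only [A13, Matrix.transpose_apply, Matrix.of_apply]
  congr 1
  simp only [eq_comm]

lemma A23_transpose (A : Mat2 n) : A23 Aᵀ = (A23 A)ᵀ := by
  ext p q
  simp only [A23, Matrix.transpose_apply, Matrix.of_apply]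
  congr 1
  simp only [eq_comm]

lemma QYB_transpose (R : Mat2 n) (h : QYB R) : QYB Rᵀ := by
  unfold QYB at h ⊢
  rw [A12_transpose, A13_transpose, A23_transpose, ← Matrix.transpose_mul,
    ← Matrix.transpose_mul, ← Matrix.transpose_mul, ← Matrix.transpose_mul]
  apply congrArg
  rw [← mul_assoc, ← mul_assoc, h]

lemma kron_transpose (A B : Mat1 n) : (kron A B)ᵀ = kron Aᵀ Bᵀ := by
  ext p q; simp [kron]

lemma F3m (R : Mat2 n) (hq : QYB R) (hbi : IsUnit (t2 R)) :
    R * kron (Umat R) 1 * Rtil R = kron (Umat R) 1 := by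
  have hbi' : IsUnit (t2 Rᵀ) := by rw [t2_transpose]; exact isUnit_transpose_mat2 hbi
  have h2 := F2m Rᵀ (QYB_transpose R hq) hbi'
  rw [Rtil_transpose, Vmat_transpose] at h2
  have hk : kron ((Umat R)ᵀ) (1 : Mat1 n) = (kron (Umat R) 1)ᵀ := by
    rw [kron_transpose, Matrix.transpose_one]
  rw [hk] at h2
  have h3 := congrArg Matrix.transpose h2
  rwa [Matrix.transpose_mul, Matrix.transpose_mul, Matrix.transpose_transpose,
    Matrix.transpose_transpose, Matrix.transpose_transpose, ← mul_assoc] at h3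

lemma F4m (R : Mat2 n) (hq : QYB R) (hbi : IsUnit (t2 R)) :
    R * kron 1 (Vmat R) * Rtil R = kron 1 (Vmat R) := by
  have hbi' : IsUnit (t2 Rᵀ) := by rw [t2_transpose]; exact isUnit_transpose_mat2 hbi
  have h2 := F1m Rᵀ (QYB_transpose R hq) hbi'
  rw [Rtil_transpose, Umat_transpose] at h2
  have hk : kron (1 : Mat1 n) ((Vmat R)ᵀ) = (kron 1 (Vmat R))ᵀ := by
    rw [kron_transpose, Matrix.transpose_one]
  rw [hk] at h2
  have h3 := congrArg Matrix.transpose h2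
  rwa [Matrix.transpose_mul, Matrix.transpose_mul, Matrix.transpose_transpose,
    Matrix.transpose_transpose, Matrix.transpose_transpose, ← mul_assoc] at h3

end transposeStuff

lemma A12_mul (A B : Mat2 n) : A12 A * A12 B = A12 (A * B) := by
  ext p q
  rw [Matrix.mul_apply]
  simp only [A12, Matrix.of_apply, Fintype.sum_prod_type, mul2_apply, Finset.sum_mul,
    mul_ite, ite_mul, mul_one, one_mul, mul_zero, zero_mul, Finset.sum_ite_irrel,
    Finset.sum_const_zero, Finset.sum_ite_eq, Finset.sum_ite_eq', Finset.mem_univ, if_true]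

lemma A23_mul (A B : Mat2 n) : A23 A * A23 B = A23 (A * B) := by
  ext p q
  rw [Matrix.mul_apply]
  simp only [A23, Matrix.of_apply, Fintype.sum_prod_type, mul2_apply, Finset.mul_sum,
    mul_ite, ite_mul, mul_one, one_mul, mul_zero, zero_mul, Finset.sum_ite_irrel,
    Finset.sum_const_zero, Finset.sum_ite_eq, Finset.sum_ite_eq', Finset.mem_univ, if_true]

lemma P12_mul (M : Mat3 n) (p q : Fin n × Fin n × Fin n) :
    (A12 (Pmat n) * M) p q = M (p.2.1, p.1, p.2.2) q := by
  rw [Matrix.mul_apply]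
  simp only [A12, Pmat, Matrix.of_apply, Fintype.sum_prod_type, ite_and, mul_ite, ite_mul,
    mul_one, one_mul, mul_zero, zero_mul, Finset.sum_ite_irrel, Finset.sum_const_zero,
    Finset.sum_ite_eq, Finset.sum_ite_eq', Finset.mem_univ, if_true]

lemma mul_P12 (M : Mat3 n) (p q : Fin n × Fin n × Fin n) :
    (M * A12 (Pmat n)) p q = M p (q.2.1, q.1, q.2.2) := by
  rw [Matrix.mul_apply]
  simp only [A12, Pmat, Matrix.of_apply, Fintype.sum_prod_type, ite_and, mul_ite, ite_mul,
    mul_one, one_mul, mul_zero, zero_mul, Finset.sum_ite_irrel, Finset.sum_const_zero,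
    Finset.sum_ite_eq, Finset.sum_ite_eq', Finset.mem_univ, if_true]

lemma P23_mul (M : Mat3 n) (p q : Fin n × Fin n × Fin n) :
    (A23 (Pmat n) * M) p q = M (p.1, p.2.2, p.2.1) q := by
  rw [Matrix.mul_apply]
  simp only [A23, Pmat, Matrix.of_apply, Fintype.sum_prod_type, ite_and, mul_ite, ite_mul,
    mul_one, one_mul, mul_zero, zero_mul, Finset.sum_ite_irrel, Finset.sum_const_zero,
    Finset.sum_ite_eq, Finset.sum_ite_eq', Finset.mem_univ, if_true]

lemma mul_P23 (M : Mat3 n) (p q : Fin n × Fin n × Fin n) :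
    (M * A23 (Pmat n)) p q = M p (q.1, q.2.2, q.2.1) := by
  rw [Matrix.mul_apply]
  simp only [A23, Pmat, Matrix.of_apply, Fintype.sum_prod_type, ite_and, mul_ite, ite_mul,
    mul_one, one_mul, mul_zero, zero_mul, Finset.sum_ite_irrel, Finset.sum_const_zero,
    Finset.sum_ite_eq, Finset.sum_ite_eq', Finset.mem_univ, if_true]

lemma conj1 (X : Mat2 n) : A12 X * A23 (Pmat n) = A23 (Pmat n) * A13 X := by
  ext p q
  rw [mul_P23, P23_mul]
  simp [A12, A13]

lemma conj2 (X : Mat2 n) : A23 X * A12 (Pmat n) = A12 (Pmat n) * A13 X := by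
  ext p q
  rw [mul_P12, P12_mul]
  simp only [A23, A13, Matrix.of_apply]
  ring

lemma conj3 (X : Mat2 n) : A13 X * A12 (Pmat n) = A12 (Pmat n) * A23 X := by
  ext p q
  rw [mul_P12, P12_mul]
  simp only [A23, A13, Matrix.of_apply]
  ring

lemma conj4 (X : Mat2 n) : A13 X * A23 (Pmat n) = A23 (Pmat n) * A12 X := by
  ext p q
  rw [mul_P23, P23_mul]
  simp [A12, A13]

lemma Pbraid : A12 (Pmat n) * A23 (Pmat n) * A12 (Pmat n)
    = A23 (Pmat n) * A12 (Pmat n) * A23 (Pmat n) := by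
  rw [conj1 (Pmat n), mul_assoc, conj3 (Pmat n), ← mul_assoc]

lemma braid_PR (R : Mat2 n) (hq : QYB R) : Braid (Pmat n * R) := by
  unfold Braid
  rw [← A12_mul, ← A23_mul]
  have c1' : ∀ M : Mat3 n, A12 R * (A23 (Pmat n) * M) = A23 (Pmat n) * (A13 R * M) :=
    fun M => by rw [← mul_assoc, conj1, mul_assoc]
  have c2' : ∀ M : Mat3 n, A23 R * (A12 (Pmat n) * M) = A12 (Pmat n) * (A13 R * M) :=
    fun M => by rw [← mul_assoc, conj2, mul_assoc]
  have c3' : ∀ M : Mat3 n, A13 R * (A12 (Pmat n) * M) = A12 (Pmat n) * (A23 R * M) :=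
    fun M => by rw [← mul_assoc, conj3, mul_assoc]
  have hq' : A12 R * (A13 R * A23 R) = A23 R * (A13 R * A12 R) := by
    have := hq; unfold QYB at this; rw [← mul_assoc, ← mul_assoc, this]
  have hPb : ∀ M : Mat3 n, A12 (Pmat n) * (A23 (Pmat n) * (A12 (Pmat n) * M))
      = A23 (Pmat n) * (A12 (Pmat n) * (A23 (Pmat n) * M)) := fun M => by
    rw [← mul_assoc, ← mul_assoc, Pbraid, mul_assoc, mul_assoc]
  have c4' : ∀ M : Mat3 n, A13 R * (A23 (Pmat n) * M) = A23 (Pmat n) * (A12 R * M) :=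
    fun M => by rw [← mul_assoc, conj4, mul_assoc]
  simp only [mul_assoc]
  rw [c1', c2', c3', c2', c1', c4', ← hq', hPb]

lemma braid_RP (R : Mat2 n) (hq : QYB R) : Braid (R * Pmat n) := by
  unfold Braid
  rw [← A12_mul, ← A23_mul]
  have d1' : ∀ M : Mat3 n, A23 (Pmat n) * (A13 R * M) = A12 R * (A23 (Pmat n) * M) :=
    fun M => by rw [← mul_assoc, ← conj1, mul_assoc]
  have d2' : ∀ M : Mat3 n, A12 (Pmat n) * (A13 R * M) = A23 R * (A12 (Pmat n) * M) :=
    fun M => by rw [← mul_assoc, ← conj2, mul_assoc]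
  have d3' : ∀ M : Mat3 n, A12 (Pmat n) * (A23 R * M) = A13 R * (A12 (Pmat n) * M) :=
    fun M => by rw [← mul_assoc, ← conj3, mul_assoc]
  have d4' : ∀ M : Mat3 n, A23 (Pmat n) * (A12 R * M) = A13 R * (A23 (Pmat n) * M) :=
    fun M => by rw [← mul_assoc, ← conj4, mul_assoc]
  have hq'' : ∀ M : Mat3 n, A12 R * (A13 R * (A23 R * M)) = A23 R * (A13 R * (A12 R * M)) :=
    fun M => by
      have h := hq; unfold QYB at h
      rw [← mul_assoc, ← mul_assoc, ← mul_assoc, ← mul_assoc, h]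
  have hPb2 : A12 (Pmat n) * (A23 (Pmat n) * A12 (Pmat n))
      = A23 (Pmat n) * (A12 (Pmat n) * A23 (Pmat n)) := by
    have h := Pbraid (n := n)
    rw [← mul_assoc, ← mul_assoc, h]
  simp only [mul_assoc]
  rw [d3', d4', d2', d3', d4', d1', hq'', hPb2]

lemma kronUU_split (A : Mat1 n) : kron A 1 * kron 1 A = kron A A := by
  rw [kron_mul_kron, mul_one, one_mul]

lemma kronVV_split (A : Mat1 n) : kron 1 A * kron A 1 = kron A A := by
  rw [kron_mul_kron, mul_one, one_mul]

lemma Am (R : Mat2 n) (hq : QYB R) (hbi : IsUnit (t2 R)) :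
    R * kron (Umat R) (Umat R) = kron (Umat R) (Umat R) * R := by
  have h1 := F3m R hq hbi
  have h2 : Rtil R * (kron 1 (Umat R) * R) = kron 1 (Umat R) := by
    rw [← mul_assoc]; exact F1m R hq hbi
  symm
  calc kron (Umat R) (Umat R) * R
      = kron (Umat R) 1 * kron 1 (Umat R) * R := by rw [kronUU_split]
    _ = R * kron (Umat R) 1 * Rtil R * kron 1 (Umat R) * R := by rw [h1]
    _ = R * kron (Umat R) 1 * (Rtil R * (kron 1 (Umat R) * R)) := by
        simp only [mul_assoc]
    _ = R * kron (Umat R) 1 * kron 1 (Umat R) := by rw [h2]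
    _ = R * kron (Umat R) (Umat R) := by rw [mul_assoc, kronUU_split]

lemma Bm (R : Mat2 n) (hq : QYB R) (hbi : IsUnit (t2 R)) :
    R * kron (Vmat R) (Vmat R) = kron (Vmat R) (Vmat R) * R := by
  have h1 := F4m R hq hbi
  have h2 : Rtil R * (kron (Vmat R) 1 * R) = kron (Vmat R) 1 := by
    rw [← mul_assoc]; exact F2m R hq hbi
  symm
  calc kron (Vmat R) (Vmat R) * R
      = kron 1 (Vmat R) * kron (Vmat R) 1 * R := by rw [kronVV_split]
    _ = R * kron 1 (Vmat R) * Rtil R * kron (Vmat R) 1 * R := by rw [h1]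
    _ = R * kron 1 (Vmat R) * (Rtil R * (kron (Vmat R) 1 * R)) := by
        simp only [mul_assoc]
    _ = R * kron 1 (Vmat R) * kron (Vmat R) 1 := by rw [h2]
    _ = R * kron (Vmat R) (Vmat R) := by rw [mul_assoc, kronVV_split]

lemma E1m (R : Mat2 n) (hq : QYB R) (hbi : Biinv R) :
    kron 1 (Umat R) * R⁻¹ = Rtil R * kron 1 (Umat R) := by
  have hRRi : R * R⁻¹ = 1 :=
    Matrix.mul_nonsing_inv _ ((Matrix.isUnit_iff_isUnit_det _).1 hbi.1)
  have h := congrArg (· * R⁻¹) (F1m R hq hbi.2)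
  rw [mul_assoc, mul_assoc, hRRi, mul_one] at h
  exact h.symm

lemma E2m (R : Mat2 n) (hq : QYB R) (hbi : Biinv R) :
    kron (Vmat R) 1 * R⁻¹ = Rtil R * kron (Vmat R) 1 := by
  have hRRi : R * R⁻¹ = 1 :=
    Matrix.mul_nonsing_inv _ ((Matrix.isUnit_iff_isUnit_det _).1 hbi.1)
  have h := congrArg (· * R⁻¹) (F2m R hq hbi.2)
  rw [mul_assoc, mul_assoc, hRRi, mul_one] at h
  exact h.symm

lemma I1e (R : Mat2 n) (hbi : IsUnit (t2 R)) (c d : Fin n) :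
    ∑ e, ∑ f, Umat R f e * R (e, d) (c, f) = if c = d then 1 else 0 := by
  calc
    ∑ e, ∑ f, Umat R f e * R (e, d) (c, f)
      = ∑ e, ∑ f, ∑ g, Rtil R (g, f) (e, g) * R (e, d) (c, f) := by
        refine Finset.sum_congr rfl fun e _ => Finset.sum_congr rfl fun f _ => ?_
        simp only [Umat, Matrix.of_apply, Finset.sum_mul]
    _ = ∑ g, ∑ e, ∑ f, Rtil R (g, f) (e, g) * R (e, d) (c, f) := by
        rw [← move1_3]
    _ = ∑ g, if g = c ∧ g = d then 1 else 0 :=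
        Finset.sum_congr rfl fun g _ => relL R hbi g g c d
    _ = if c = d then 1 else 0 := by
        simp [ite_and, Finset.sum_ite_eq, Finset.sum_ite_eq']

lemma I2e (R : Mat2 n) (hbi : IsUnit (t2 R)) (a b : Fin n) :
    ∑ e, ∑ f, R (a, f) (e, b) * Vmat R e f = if a = b then 1 else 0 := by
  calc
    ∑ e, ∑ f, R (a, f) (e, b) * Vmat R e f
      = ∑ e, ∑ f, ∑ g, R (a, f) (e, b) * Rtil R (e, g) (g, f) := by
        refine Finset.sum_congr rfl fun e _ => Finset.sum_congr rfl fun f _ => ?_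
        simp only [Vmat, Matrix.of_apply, Finset.mul_sum]
    _ = ∑ g, ∑ e, ∑ f, R (a, f) (e, b) * Rtil R (e, g) (g, f) := by
        rw [← move1_3]
    _ = ∑ g, if a = g ∧ b = g then 1 else 0 :=
        Finset.sum_congr rfl fun g _ => relM R hbi a b g g
    _ = if a = b then 1 else 0 := by
        simp [ite_and, Finset.sum_ite_eq, Finset.sum_ite_eq', eq_comm]

lemma Pmat2_mul (M : Mat2 n) (p q : Fin n × Fin n) :
    (Pmat n * M) p q = M (p.2, p.1) q := by
  rw [mul2_apply]
  simp only [Pmat, Matrix.of_apply, ite_and, mul_ite, ite_mul, mul_one, one_mul, mul_zero,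
    zero_mul, Finset.sum_ite_irrel, Finset.sum_const_zero, Finset.sum_ite_eq,
    Finset.sum_ite_eq', Finset.mem_univ, if_true]

lemma mul_Pmat2 (M : Mat2 n) (p q : Fin n × Fin n) :
    (M * Pmat n) p q = M p (q.2, q.1) := by
  rw [mul2_apply]
  simp only [Pmat, Matrix.of_apply, ite_and, mul_ite, ite_mul, mul_one, one_mul, mul_zero,
    zero_mul, Finset.sum_ite_irrel, Finset.sum_const_zero, Finset.sum_ite_eq,
    Finset.sum_ite_eq', Finset.mem_univ, if_true]

lemma J1m (R : Mat2 n) (hbi : IsUnit (t2 R)) :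
    Tr2 (Pmat n * (kron (Umat R) 1 * R)) = 1 := by
  ext a c
  have h : ∀ d : Fin n, (Pmat n * (kron (Umat R) 1 * R)) (a, d) (c, d)
      = ∑ x, Umat R d x * R (x, a) (c, d) := by
    intro d
    rw [Pmat2_mul, mul2_apply]
    simp only [kron, Matrix.of_apply, Matrix.one_apply, mul_ite, ite_mul, mul_one, one_mul,
      mul_zero, zero_mul, Finset.sum_ite_irrel, Finset.sum_const_zero, Finset.sum_ite_eq,
      Finset.sum_ite_eq', Finset.mem_univ, if_true]
  calc Tr2 (Pmat n * (kron (Umat R) 1 * R)) a c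
      = ∑ d, ∑ x, Umat R d x * R (x, a) (c, d) := by
        simp only [Tr2, Matrix.of_apply]
        exact Finset.sum_congr rfl fun d _ => h d
    _ = ∑ x, ∑ d, Umat R d x * R (x, a) (c, d) := Finset.sum_comm
    _ = if c = a then 1 else 0 := I1e R hbi c a
    _ = (1 : Mat1 n) a c := by simp [Matrix.one_apply, eq_comm]

lemma J2m (R : Mat2 n) (hbi : IsUnit (t2 R)) :
    Tr2 (kron 1 (Vmat R) * (R * Pmat n)) = 1 := by
  ext a c
  have h : ∀ d : Fin n, (kron 1 (Vmat R) * (R * Pmat n)) (a, d) (c, d)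
      = ∑ y, R (a, y) (d, c) * Vmat R d y := by
    intro d
    rw [mul2_apply]
    simp only [kron, Matrix.of_apply, Matrix.one_apply, mul_ite, ite_mul, mul_one, one_mul,
      mul_zero, zero_mul, Finset.sum_ite_irrel, Finset.sum_const_zero, Finset.sum_ite_eq,
      Finset.sum_ite_eq', Finset.mem_univ, if_true, mul_Pmat2]
    exact Finset.sum_congr rfl fun y _ => by ring
  calc Tr2 (kron 1 (Vmat R) * (R * Pmat n)) a c
      = ∑ d, ∑ y, R (a, y) (d, c) * Vmat R d y := by
        simp only [Tr2, Matrix.of_apply]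
        exact Finset.sum_congr rfl fun d _ => h d
    _ = if a = c then 1 else 0 := I2e R hbi a c
    _ = (1 : Mat1 n) a c := by simp [Matrix.one_apply]

lemma J3m (R : Mat2 n) :
    Tr2 (Rtil R * (kron 1 (Umat R) * Pmat n)) = Vmat R * Umat R := by
  ext a c
  have h : ∀ d : Fin n, (Rtil R * (kron 1 (Umat R) * Pmat n)) (a, d) (c, d)
      = ∑ y, Rtil R (a, d) (d, y) * Umat R y c := by
    intro d
    rw [mul2_apply]
    simp only [mul_Pmat2, kron, Matrix.of_apply, Matrix.one_apply, mul_ite, ite_mul, mul_one,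
      one_mul, mul_zero, zero_mul, Finset.sum_ite_irrel, Finset.sum_const_zero,
      Finset.sum_ite_eq, Finset.sum_ite_eq', Finset.mem_univ, if_true]
  calc Tr2 (Rtil R * (kron 1 (Umat R) * Pmat n)) a c
      = ∑ d, ∑ y, Rtil R (a, d) (d, y) * Umat R y c := by
        simp only [Tr2, Matrix.of_apply]
        exact Finset.sum_congr rfl fun d _ => h d
    _ = ∑ y, ∑ d, Rtil R (a, d) (d, y) * Umat R y c := Finset.sum_comm
    _ = ∑ y, Vmat R a y * Umat R y c := by
        refine Finset.sum_congr rfl fun y _ => ?_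
        rw [← Finset.sum_mul]
        simp [Vmat]
    _ = (Vmat R * Umat R) a c := (Matrix.mul_apply).symm

lemma J4m (R : Mat2 n) :
    Tr2 (Pmat n * (Rtil R * kron (Vmat R) 1)) = Umat R * Vmat R := by
  ext a c
  have h : ∀ d : Fin n, (Pmat n * (Rtil R * kron (Vmat R) 1)) (a, d) (c, d)
      = ∑ x, Rtil R (d, a) (x, d) * Vmat R x c := by
    intro d
    rw [Pmat2_mul, mul2_apply]
    simp only [kron, Matrix.of_apply, Matrix.one_apply, mul_ite, ite_mul, mul_one, one_mul,
      mul_zero, zero_mul, Finset.sum_ite_irrel, Finset.sum_const_zero, Finset.sum_ite_eq,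
      Finset.sum_ite_eq', Finset.mem_univ, if_true]
  calc Tr2 (Pmat n * (Rtil R * kron (Vmat R) 1)) a c
      = ∑ d, ∑ x, Rtil R (d, a) (x, d) * Vmat R x c := by
        simp only [Tr2, Matrix.of_apply]
        exact Finset.sum_congr rfl fun d _ => h d
    _ = ∑ x, ∑ d, Rtil R (d, a) (x, d) * Vmat R x c := Finset.sum_comm
    _ = ∑ x, Umat R a x * Vmat R x c := by
        refine Finset.sum_congr rfl fun x _ => ?_
        rw [← Finset.sum_mul]
        simp [Umat]
    _ = (Umat R * Vmat R) a c := (Matrix.mul_apply).symm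

lemma commPR (R : Mat2 n) (hq : QYB R) (hbi : IsUnit (t2 R)) :
    Pmat n * R * kron (Umat R) (Umat R) = kron (Umat R) (Umat R) * (Pmat n * R) := by
  calc Pmat n * R * kron (Umat R) (Umat R)
      = Pmat n * (R * kron (Umat R) (Umat R)) := mul_assoc _ _ _
    _ = Pmat n * (kron (Umat R) (Umat R) * R) := by rw [Am R hq hbi]
    _ = Pmat n * kron (Umat R) (Umat R) * R := (mul_assoc _ _ _).symm
    _ = kron (Umat R) (Umat R) * Pmat n * R := by rw [Pmat_mul_kron]
    _ = kron (Umat R) (Umat R) * (Pmat n * R) := mul_assoc _ _ _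

lemma commRP (R : Mat2 n) (hq : QYB R) (hbi : IsUnit (t2 R)) :
    R * Pmat n * kron (Vmat R) (Vmat R) = kron (Vmat R) (Vmat R) * (R * Pmat n) := by
  calc R * Pmat n * kron (Vmat R) (Vmat R)
      = R * (Pmat n * kron (Vmat R) (Vmat R)) := mul_assoc _ _ _
    _ = R * (kron (Vmat R) (Vmat R) * Pmat n) := by rw [Pmat_mul_kron]
    _ = R * kron (Vmat R) (Vmat R) * Pmat n := (mul_assoc _ _ _).symm
    _ = kron (Vmat R) (Vmat R) * R * Pmat n := by rw [Bm R hq hbi]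
    _ = kron (Vmat R) (Vmat R) * (R * Pmat n) := mul_assoc _ _ _

lemma T5lem (R : Mat2 n) (hq : QYB R) (hbi : Biinv R) :
    Tr2 (Pmat n * R * kron (Umat R) (Umat R)) = Umat R := by
  have h2 : kron 1 (Umat R) * (Pmat n * R) = Pmat n * (kron (Umat R) 1 * R) := by
    rw [← mul_assoc, ← Pmat_mul_kron, mul_assoc]
  rw [commPR R hq hbi.2, ← kronUU_split, mul_assoc, Tr2_kron_left, h2, J1m R hbi.2, mul_one]

lemma T5lem' (R : Mat2 n) (hq : QYB R) (hbi : Biinv R) :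
    Tr2 (R * Pmat n * kron (Vmat R) (Vmat R)) = Vmat R := by
  have hsplit : kron (Vmat R) (Vmat R) = kron (Vmat R) 1 * kron 1 (Vmat R) :=
    (kronUU_split _).symm
  rw [commRP R hq hbi.2, hsplit, mul_assoc, Tr2_kron_left, J2m R hbi.2, mul_one]

lemma T6lem (R : Mat2 n) (hq : QYB R) (hbi : Biinv R) (α : ℂ)
    (hVU : Vmat R * Umat R = (α ^ 2) • (1 : Mat1 n)) :
    Tr2 ((Pmat n * R)⁻¹ * kron (Umat R) (Umat R)) = (α ^ 2) • Umat R := by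
  have hPinv : (Pmat n)⁻¹ = Pmat n := Matrix.inv_eq_right_inv Pmat_mul_Pmat
  have hSinv : (Pmat n * R)⁻¹ = R⁻¹ * Pmat n := by rw [Matrix.mul_inv_rev, hPinv]
  have hdet := (Matrix.isUnit_iff_isUnit_det _).1 hbi.1
  have hRiR : R⁻¹ * R = 1 := Matrix.nonsing_inv_mul _ hdet
  have hRRi : R * R⁻¹ = 1 := Matrix.mul_nonsing_inv _ hdet
  have hAminv : R⁻¹ * kron (Umat R) (Umat R) = kron (Umat R) (Umat R) * R⁻¹ := by
    calc R⁻¹ * kron (Umat R) (Umat R)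
        = R⁻¹ * kron (Umat R) (Umat R) * (R * R⁻¹) := by rw [hRRi, mul_one]
      _ = R⁻¹ * (kron (Umat R) (Umat R) * R) * R⁻¹ := by simp only [mul_assoc]
      _ = R⁻¹ * (R * kron (Umat R) (Umat R)) * R⁻¹ := by rw [Am R hq hbi.2]
      _ = kron (Umat R) (Umat R) * R⁻¹ := by rw [← mul_assoc, hRiR, one_mul]
  have key : (Pmat n * R)⁻¹ * kron (Umat R) (Umat R)
      = kron (Umat R) 1 * (Rtil R * (kron 1 (Umat R) * Pmat n)) := by
    rw [hSinv, mul_assoc, Pmat_mul_kron, ← mul_assoc, hAminv, ← kronUU_split,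
      mul_assoc (kron (Umat R) 1), E1m R hq hbi, mul_assoc, mul_assoc]
  rw [key, Tr2_kron_left, J3m, hVU, Matrix.mul_smul, mul_one]

lemma T6lem' (R : Mat2 n) (hq : QYB R) (hbi : Biinv R) (α : ℂ)
    (hUV : Umat R * Vmat R = (α ^ 2) • (1 : Mat1 n)) :
    Tr2 ((R * Pmat n)⁻¹ * kron (Vmat R) (Vmat R)) = (α ^ 2) • Vmat R := by
  have hPinv : (Pmat n)⁻¹ = Pmat n := Matrix.inv_eq_right_inv Pmat_mul_Pmat
  have hSinv : (R * Pmat n)⁻¹ = Pmat n * R⁻¹ := by rw [Matrix.mul_inv_rev, hPinv]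
  have hdet := (Matrix.isUnit_iff_isUnit_det _).1 hbi.1
  have hRiR : R⁻¹ * R = 1 := Matrix.nonsing_inv_mul _ hdet
  have hRRi : R * R⁻¹ = 1 := Matrix.mul_nonsing_inv _ hdet
  have hBminv : R⁻¹ * kron (Vmat R) (Vmat R) = kron (Vmat R) (Vmat R) * R⁻¹ := by
    calc R⁻¹ * kron (Vmat R) (Vmat R)
        = R⁻¹ * kron (Vmat R) (Vmat R) * (R * R⁻¹) := by rw [hRRi, mul_one]
      _ = R⁻¹ * (kron (Vmat R) (Vmat R) * R) * R⁻¹ := by simp only [mul_assoc]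
      _ = R⁻¹ * (R * kron (Vmat R) (Vmat R)) * R⁻¹ := by rw [Bm R hq hbi.2]
      _ = kron (Vmat R) (Vmat R) * R⁻¹ := by rw [← mul_assoc, hRiR, one_mul]
  have key : (R * Pmat n)⁻¹ * kron (Vmat R) (Vmat R)
      = kron (Vmat R) 1 * (Pmat n * (Rtil R * kron (Vmat R) 1)) := by
    calc (R * Pmat n)⁻¹ * kron (Vmat R) (Vmat R)
        = Pmat n * (R⁻¹ * kron (Vmat R) (Vmat R)) := by rw [hSinv, mul_assoc]
      _ = Pmat n * (kron (Vmat R) (Vmat R) * R⁻¹) := by rw [hBminv]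
      _ = Pmat n * kron (Vmat R) (Vmat R) * R⁻¹ := (mul_assoc _ _ _).symm
      _ = kron (Vmat R) (Vmat R) * Pmat n * R⁻¹ := by rw [Pmat_mul_kron]
      _ = kron (Vmat R) 1 * kron 1 (Vmat R) * Pmat n * R⁻¹ := by rw [kronUU_split]
      _ = kron (Vmat R) 1 * (kron 1 (Vmat R) * Pmat n) * R⁻¹ := by rw [mul_assoc (kron (Vmat R) 1)]
      _ = kron (Vmat R) 1 * (Pmat n * kron (Vmat R) 1) * R⁻¹ := by rw [← Pmat_mul_kron]
      _ = kron (Vmat R) 1 * (Pmat n * (kron (Vmat R) 1 * R⁻¹)) := by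
          simp only [mul_assoc]
      _ = kron (Vmat R) 1 * (Pmat n * (Rtil R * kron (Vmat R) 1)) := by rw [E2m R hq hbi]
  rw [key, Tr2_kron_left, J4m, hUV, Matrix.mul_smul, mul_one]

end Aux

theorem enhancement_sufficient_def1 (n : ℕ) (hn : 1 ≤ n) (R : Mat2 n)
    (hQYB : QYB R) (hbi : Biinv R) (α : ℂ) (hα : α ≠ 0)
    (hVU : Vmat R * Umat R = (α ^ 2) • (1 : Mat1 n)) :
    IsEnhanced1 (Pmat n * R) (Umat R) α⁻¹ α ∧
    IsEnhanced1 (R * Pmat n) (Vmat R) α⁻¹ α := by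
  have hPunit : IsUnit (Pmat n) :=
    ⟨⟨Pmat n, Pmat n, Pmat_mul_Pmat, Pmat_mul_Pmat⟩, rfl⟩
  have hα2 : (α ^ 2 : ℂ) ≠ 0 := pow_ne_zero 2 hα
  have h1 : ((α ^ 2)⁻¹ • Vmat R) * Umat R = 1 := by
    rw [smul_mul_assoc, hVU, smul_smul, inv_mul_cancel₀ hα2, one_smul]
  have h2 : Umat R * ((α ^ 2)⁻¹ • Vmat R) = 1 := mul_eq_one_comm.mp h1
  rw [Matrix.mul_smul] at h2
  have hUV : Umat R * Vmat R = (α ^ 2) • (1 : Mat1 n) := by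
    calc Umat R * Vmat R = (α ^ 2) • ((α ^ 2)⁻¹ • (Umat R * Vmat R)) := by
          rw [smul_smul, mul_inv_cancel₀ hα2, one_smul]
      _ = (α ^ 2) • (1 : Mat1 n) := by rw [h2]
  have hscal1 : (α⁻¹ * α : ℂ) = 1 := inv_mul_cancel₀ hα
  have hscal2 : ((α⁻¹)⁻¹ * α : ℂ) = α ^ 2 := by rw [inv_inv, ← pow_two]
  constructor
  · refine ⟨hPunit.mul hbi.1, inv_ne_zero hα, hα, braid_PR R hQYB,
      commPR R hQYB hbi.2, ?_, ?_⟩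
    · rw [hscal1, one_smul]
      exact T5lem R hQYB hbi
    · rw [hscal2]
      exact T6lem R hQYB hbi α hVU
  · refine ⟨hbi.1.mul hPunit, inv_ne_zero hα, hα, braid_RP R hQYB,
      commRP R hQYB hbi.2, ?_, ?_⟩
    · rw [hscal1, one_smul]
      exact T5lem' R hQYB hbi
    · rw [hscal2]
      exact T6lem' R hQYB hbi α hUV


end

end Enhance
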